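/- Let X_1, ..., X_n be real random variables such that the index set {1,...,n} can be partitioned into k classes, where within each class the variables are pairwise independent (more precisely, the variables in each class are mutually independent). Then Var(Σ_{i=1}^n X_i) ≤ k · Σ_{i=1}^n Var(X_i). -/

import Mathlib

open MeasureTheory ProbabilityTheory

/-- Chromatic-number variance bound: if the index set can be partitioned into
`k` classes such that the variables within each class are mutually independent,
then `Var(Σᵢ Xᵢ) ≤ k·Σᵢ Var(Xᵢ)`. -/
theorem stmt13 {Ω : Type*} [MeasureSpace Ω]
    [IsProbabilityMeasure (ℙ : Measure Ω)]
    (n k : ℕ) (X : Fin n → Ω → ℝ)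
    (hX : ∀ i, MemLp (X i) 2 ℙ) (hmeas : ∀ i, Measurable (X i))
    (c : Fin n → Fin k)
    (hind : ∀ j : Fin k,
      iIndepFun
        (fun i : {i : Fin n // c i = j} => X i) ℙ) :
    variance (fun ω => ∑ i, X i ω) ℙ ≤ (k : ℝ) * ∑ i, variance (X i) ℙ := by
  classical
  set S : Fin k → Ω → ℝ := fun j => ∑ i ∈ Finset.univ.filter (fun i => c i = j), X i with hS
  have hSmem : ∀ j, MemLp (S j) 2 ℙ := fun j =>
    memLp_finset_sum' _ (fun i _ => hX i)
  -- variance of each class sum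
  have hvarS : ∀ j, variance (S j) ℙ
      = ∑ i ∈ Finset.univ.filter (fun i => c i = j), variance (X i) ℙ := by
    intro j
    apply IndepFun.variance_sum (fun i _ => hX i)
    intro i₁ h₁ i₂ h₂ hne
    simp only [Finset.coe_filter, Set.mem_setOf_eq, Finset.mem_univ, true_and] at h₁ h₂
    exact (hind j).indepFun (i := ⟨i₁, h₁⟩) (j := ⟨i₂, h₂⟩)
      (by simpa [Subtype.ext_iff] using hne)
  -- sum decomposition
  have hsum : (fun ω => ∑ i, X i ω) = fun ω => ∑ j, S j ω := by
    funext ω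
    simp only [hS, Finset.sum_apply]
    exact (Finset.sum_fiberwise Finset.univ c (fun i => X i ω)).symm
  have hsumvar : (∑ i, variance (X i) ℙ) = ∑ j, variance (S j) ℙ := by
    simp only [hvarS]
    exact (Finset.sum_fiberwise Finset.univ c (fun i => variance (X i) ℙ)).symm
  rw [hsum, hsumvar]
  -- centered variables
  set m : Fin k → ℝ := fun j => ∫ ω, S j ω ∂ℙ with hm
  set Y : Fin k → Ω → ℝ := fun j ω => S j ω - m j with hY
  have hYmem : ∀ j, MemLp (Y j) 2 ℙ := fun j => (hSmem j).sub (memLp_const (m j))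
  have hYint : ∀ j, ∫ ω, Y j ω ∂ℙ = 0 := by
    intro j
    simp only [hY]
    rw [integral_sub ((hSmem j).integrable one_le_two) (integrable_const _)]
    simp [hm]
  have hVarY : ∀ j, variance (Y j) ℙ = variance (S j) ℙ := by
    intro j
    rw [variance_eq_integral (hSmem j).aemeasurable, variance_eq_integral (hYmem j).aemeasurable]
    congr 1
    funext ω
    simp only [hY, Pi.sub_apply, Pi.pow_apply]
    rw [show (∫ ω, Y j ω ∂ℙ) = 0 from hYint j]
    ring
  have hYsum : MemLp (fun ω => ∑ j, Y j ω) 2 ℙ := by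
    have h := memLp_finset_sum' (μ := (ℙ : Measure Ω)) Finset.univ (fun j _ => hYmem j)
    have he : (∑ j, Y j) = fun ω => ∑ j, Y j ω := funext fun ω => Finset.sum_apply ω _ _
    exact he ▸ h
  have hvarSum : variance (fun ω => ∑ j, S j ω) ℙ
      = ∫ ω, (∑ j, Y j ω) ^ 2 ∂ℙ := by
    have hmem : MemLp (fun ω => ∑ j, S j ω) 2 ℙ := by
      have h := memLp_finset_sum' (μ := (ℙ : Measure Ω)) Finset.univ (fun j _ => hSmem j)
      have he : (∑ j, S j) = fun ω => ∑ j, S j ω := funext fun ω => Finset.sum_apply ω _ _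
      exact he ▸ h
    rw [variance_eq_integral hmem.aemeasurable]
    have hint : (∫ ω, (∑ j, S j ω) ∂ℙ) = ∑ j, m j := by
      rw [integral_finset_sum _ (fun j _ => (hSmem j).integrable one_le_two)]
    congr 1
    funext ω
    simp only [Pi.sub_apply, Pi.pow_apply, hint, hY, Finset.sum_sub_distrib]
  rw [hvarSum]
  have hptwise : ∀ ω, (∑ j, Y j ω) ^ 2 ≤ (k : ℝ) * ∑ j, (Y j ω) ^ 2 := by
    intro ω
    have := sq_sum_le_card_mul_sum_sq (s := (Finset.univ : Finset (Fin k)))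
      (f := fun j => Y j ω)
    simpa using this
  have hintYsq : ∀ j, Integrable (fun ω => (Y j ω) ^ 2) ℙ := fun j =>
    (hYmem j).integrable_sq
  calc ∫ ω, (∑ j, Y j ω) ^ 2 ∂ℙ
      ≤ ∫ ω, (k : ℝ) * ∑ j, (Y j ω) ^ 2 ∂ℙ := by
        apply integral_mono hYsum.integrable_sq
        · exact (integrable_finset_sum _ (fun j _ => hintYsq j)).const_mul _
        · exact hptwise
    _ = (k : ℝ) * ∑ j, variance (Y j) ℙ := by
        rw [integral_const_mul, integral_finset_sum _ (fun j _ => hintYsq j)]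
        congr 1
        refine Finset.sum_congr rfl fun j _ => ?_
        rw [variance_of_integral_eq_zero (hYmem j).aemeasurable (hYint j)]
    _ ≤ (k : ℝ) * ∑ j, variance (S j) ℙ := by
        simp [hVarY]
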